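/- For all integers w ≥ 2 and h ≥ 1, with s = w + h, the binomial identity 2 · Σ_{i≥0} Σ_{j≥0} C(s−2, w+i+j) · C(s−2, w−2−i−j) = (s−3) · C(s−2, w−1) · C(s−4, w−2) holds, where the sum ranges over all pairs (i,j) of nonnegative integers with i + j ≤ w−2 (all other terms vanish) and C(n,k) is the usual binomial coefficient (equal to 0 for k > n). -/
import Mathlib

open Finset

/-- Collapse a triangular double sum of a function of `i+j` into a weighted single sum. -/
lemma tri_sum (f : ℕ → ℕ) : ∀ m : ℕ,
    ∑ i ∈ range m, ∑ j ∈ range (m - i), f (i + j) = ∑ k ∈ range m, (k + 1) * f k := by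
  intro m
  induction m with
  | zero => simp
  | succ m ih =>
    have step : ∀ i ∈ range (m+1), ∑ j ∈ range (m + 1 - i), f (i + j)
        = (∑ j ∈ range (m - i), f (i + j)) + f m := by
      intro i hi
      have hi' : i ≤ m := by simpa [Nat.lt_succ_iff] using hi
      have h1 : m + 1 - i = (m - i) + 1 := by omega
      rw [h1, Finset.sum_range_succ]
      congr 2
      omega
    rw [Finset.sum_congr rfl step, Finset.sum_add_distrib,
      Finset.sum_range_succ (fun i => ∑ j ∈ range (m - i), f (i + j)) m]
    simp only [Nat.sub_self, Finset.range_zero, Finset.sum_empty, Nat.add_zero,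
      Finset.sum_const, Finset.card_range, smul_eq_mul]
    rw [ih, Finset.sum_range_succ]

/-- Splitting a range sum. -/
lemma sum_range_add' (f : ℕ → ℕ) (m : ℕ) : ∀ n : ℕ,
    ∑ i ∈ range (m + n), f i = (∑ i ∈ range m, f i) + ∑ i ∈ range n, f (m + i) := by
  intro n
  induction n with
  | zero => simp
  | succ n ih =>
    rw [← Nat.add_assoc, Finset.sum_range_succ, ih, Finset.sum_range_succ, Nat.add_assoc]

/-- Vandermonde over a range. -/
lemma vand (a b k : ℕ) :
    ∑ t ∈ range (k+1), Nat.choose a t * Nat.choose b (k - t) = Nat.choose (a + b) k := by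
  rw [Nat.add_choose_eq, Finset.Nat.sum_antidiagonal_eq_sum_range_succ_mk]

lemma mulrel2 (n m : ℕ) : (m + 1) * Nat.choose n (m + 1) = n * Nat.choose (n - 1) m := by
  cases n with
  | zero => simp
  | succ n =>
    have h := Nat.add_one_mul_choose_eq n m
    simp only [Nat.succ_eq_add_one, Nat.add_sub_cancel]
    zify at h ⊢
    linear_combination -h

lemma mulrel (n k : ℕ) : n * Nat.choose (n - 1) k = (n - k) * Nat.choose n k := by
  cases n with
  | zero => simp
  | succ n =>
    have h1 := Nat.add_one_mul_choose_eq n k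
    have h2 := Nat.choose_succ_right_eq (n+1) k
    simp only [Nat.succ_eq_add_one, Nat.add_sub_cancel] at *
    rw [h1, h2, Nat.mul_comm]

/-- Core identity: `2 Σ_{k≤v} (k+1) C(n,v+2+k) C(n,v-k) = n C(n-1,v+1) C(n-1,v)`. -/
lemma core (n v : ℕ) (hn : 1 ≤ n) :
    2 * (∑ k ∈ range (v+1), (k+1) * (Nat.choose n (v+2+k) * Nat.choose n (v-k)))
      = n * (Nat.choose (n-1) (v+1) * Nat.choose (n-1) v) := by
  set a := Nat.choose (n-1) v with ha
  set b := Nat.choose (n-1) (v+1) with hb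
  set S := ∑ k ∈ range (v+1), (k+1) * (Nat.choose n (v+2+k) * Nat.choose n (v-k)) with hS
  set U := ∑ t ∈ range v, Nat.choose (n-1) t * Nat.choose n (2*v+1-t) with hU
  set W := ∑ k ∈ range (v+1), Nat.choose (n-1) (v+1+k) * Nat.choose n (v-k) with hW
  set U1 := ∑ t ∈ range v, Nat.choose (n-1) t * Nat.choose (n-1) (2*v+1-t) with hU1
  set U2 := ∑ t ∈ range v, Nat.choose (n-1) t * Nat.choose (n-1) (2*v-t) with hU2
  -- (1) : n * W = 2 * S + n * U
  have step1 : n * W = 2 * S + n * U := by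
    have hUrefl : U = ∑ k ∈ range v, Nat.choose (n-1) (v-1-k) * Nat.choose n (v+2+k) := by
      rw [hU, ← Finset.sum_range_reflect
        (fun t => Nat.choose (n-1) t * Nat.choose n (2*v+1-t)) v]
      apply Finset.sum_congr rfl
      intro k hk
      have hk' : k < v := Finset.mem_range.mp hk
      have e1 : 2*v+1-(v-1-k) = v+2+k := by omega
      simp only [e1]
    have hnU : n * U = ∑ k ∈ range (v+1), (v-k) * (Nat.choose n (v-k) * Nat.choose n (v+2+k)) := by
      rw [Finset.sum_range_succ]
      have hzero : (v-v) * (Nat.choose n (v-v) * Nat.choose n (v+2+v)) = 0 := by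
        simp
      rw [hzero, Nat.add_zero, hUrefl, Finset.mul_sum]
      apply Finset.sum_congr rfl
      intro k hk
      have hk' : k < v := Finset.mem_range.mp hk
      have e1 : v - k = (v - 1 - k) + 1 := by omega
      have h := mulrel2 n (v-1-k)
      rw [e1]
      zify at h ⊢
      linear_combination (-(Nat.choose n (v+2+k) : ℤ)) * h
    have hnW : n * W = ∑ k ∈ range (v+1), (v+2+k) * (Nat.choose n (v+2+k) * Nat.choose n (v-k)) := by
      rw [hW, Finset.mul_sum]
      apply Finset.sum_congr rfl
      intro k hk
      have e1 : v+2+k = (v+1+k) + 1 := by omega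
      have h := mulrel2 n (v+1+k)
      rw [e1]
      zify at h ⊢
      linear_combination (-(Nat.choose n (v-k) : ℤ)) * h
    rw [hnW, hnU, hS, Finset.mul_sum, ← Finset.sum_add_distrib]
    apply Finset.sum_congr rfl
    intro k hk
    have hk' : k ≤ v := by have := Finset.mem_range.mp hk; omega
    have key : v+2+k = 2*(k+1) + (v-k) := by omega
    zify [hk'] at key ⊢
    linear_combination (Nat.choose n (v+2+k) : ℤ) * (Nat.choose n (v-k) : ℤ) * key
  -- (2) : U + a * C n (v+1) + W = C (2n-1) (2v+1)
  have step2 : U + a * Nat.choose n (v+1) + W = Nat.choose (2*n-1) (2*v+1) := by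
    have hfull := vand (n-1) n (2*v+1)
    have e1 : n - 1 + n = 2*n - 1 := by omega
    rw [e1] at hfull
    rw [← hfull]
    have e2 : 2*v+1+1 = (v+1) + (v+1) := by omega
    rw [e2, sum_range_add' (fun t => Nat.choose (n-1) t * Nat.choose n (2*v+1-t)) (v+1) (v+1),
        Finset.sum_range_succ (fun t => Nat.choose (n-1) t * Nat.choose n (2*v+1-t)) v]
    have e3 : 2*v+1-v = v+1 := by omega
    rw [e3]
    have e4 : (∑ i ∈ range (v+1), Nat.choose (n-1) (v+1+i) * Nat.choose n (2*v+1-(v+1+i))) = W := by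
      rw [hW]
      apply Finset.sum_congr rfl
      intro k hk
      have hk' : k ≤ v := by have := Finset.mem_range.mp hk; omega
      have e5 : 2*v+1-(v+1+k) = v-k := by omega
      rw [e5]
    rw [e4, ← hU, ← ha]
  -- (3a) : 2*U1 + 2*(a*b) = C (2n-2) (2v+1)
  have step3a : 2*U1 + 2*(a*b) = Nat.choose (2*n-2) (2*v+1) := by
    have hfull := vand (n-1) (n-1) (2*v+1)
    have e1 : n - 1 + (n - 1) = 2*n - 2 := by omega
    rw [e1] at hfull
    rw [← hfull]
    have e2 : 2*v+1+1 = (v+1) + (v+1) := by omega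
    rw [e2, sum_range_add' (fun t => Nat.choose (n-1) t * Nat.choose (n-1) (2*v+1-t)) (v+1) (v+1)]
    have refl1 : (∑ i ∈ range (v+1), Nat.choose (n-1) (v+1+i) * Nat.choose (n-1) (2*v+1-(v+1+i)))
        = ∑ t ∈ range (v+1), Nat.choose (n-1) t * Nat.choose (n-1) (2*v+1-t) := by
      rw [← Finset.sum_range_reflect
        (fun t => Nat.choose (n-1) t * Nat.choose (n-1) (2*v+1-t)) (v+1)]
      apply Finset.sum_congr rfl
      intro k hk
      have hk' : k ≤ v := by have := Finset.mem_range.mp hk; omega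
      have e3 : v+1-1-k = v-k := by omega
      have e4 : 2*v+1-(v-k) = v+1+k := by omega
      have e5 : 2*v+1-(v+1+k) = v-k := by omega
      simp only [e3, e4, e5]
      rw [Nat.mul_comm]
    rw [refl1, Finset.sum_range_succ
      (fun t => Nat.choose (n-1) t * Nat.choose (n-1) (2*v+1-t)) v]
    have e3 : 2*v+1-v = v+1 := by omega
    rw [e3, ← hU1, ← ha, ← hb]
    ring
  -- (3b) : 2*U2 + a*a = C (2n-2) (2v)
  have step3b : 2*U2 + a*a = Nat.choose (2*n-2) (2*v) := by
    have hfull := vand (n-1) (n-1) (2*v)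
    have e1 : n - 1 + (n - 1) = 2*n - 2 := by omega
    rw [e1] at hfull
    rw [← hfull]
    have e2 : 2*v+1 = v + (v+1) := by omega
    rw [e2, sum_range_add' (fun t => Nat.choose (n-1) t * Nat.choose (n-1) (2*v-t)) v (v+1)]
    have refl1 : (∑ i ∈ range (v+1), Nat.choose (n-1) (v+i) * Nat.choose (n-1) (2*v-(v+i)))
        = ∑ t ∈ range (v+1), Nat.choose (n-1) t * Nat.choose (n-1) (2*v-t) := by
      rw [← Finset.sum_range_reflect
        (fun t => Nat.choose (n-1) t * Nat.choose (n-1) (2*v-t)) (v+1)]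
      apply Finset.sum_congr rfl
      intro k hk
      have hk' : k ≤ v := by have := Finset.mem_range.mp hk; omega
      have e3 : v+1-1-k = v-k := by omega
      have e4 : 2*v-(v-k) = v+k := by omega
      have e5 : 2*v-(v+k) = v-k := by omega
      simp only [e3, e4, e5]
      rw [Nat.mul_comm]
    rw [refl1, Finset.sum_range_succ
      (fun t => Nat.choose (n-1) t * Nat.choose (n-1) (2*v-t)) v]
    have e3 : 2*v-v = v := by omega
    rw [e3, ← hU2, ← ha]
    ring
  -- (3c) : U = U1 + U2
  have step3c : U = U1 + U2 := by
    rw [hU, hU1, hU2, ← Finset.sum_add_distrib]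
    apply Finset.sum_congr rfl
    intro t ht
    have ht' : t < v := Finset.mem_range.mp ht
    obtain ⟨m, rfl⟩ : ∃ m, n = m + 1 := ⟨n - 1, by omega⟩
    simp only [Nat.add_sub_cancel]
    have e1 : 2*v+1-t = (2*v-t) + 1 := by omega
    rw [e1, Nat.choose_succ_succ', ← e1]
    ring
  -- (3d) : Pascal
  have step3d : Nat.choose (2*n-1) (2*v+1)
      = Nat.choose (2*n-2) (2*v) + Nat.choose (2*n-2) (2*v+1) := by
    obtain ⟨m, hm⟩ : ∃ m, 2*n-1 = m + 1 := ⟨2*n-2, by omega⟩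
    have e1 : m = 2*n-2 := by omega
    rw [hm, Nat.choose_succ_succ', e1]
  -- Assembly
  have e : a * Nat.choose n (v+1) = a*a + a*b := by
    obtain ⟨m, rfl⟩ : ∃ m, n = m + 1 := ⟨n - 1, by omega⟩
    simp only [Nat.add_sub_cancel] at *
    rw [Nat.choose_succ_succ', Nat.mul_add, ← ha, ← hb]
  have h1 : U + (a*a + a*b) + W = (2*U2 + a*a) + (2*U1 + 2*(a*b)) := by
    calc U + (a*a + a*b) + W = U + a * Nat.choose n (v+1) + W := by rw [e]
      _ = Nat.choose (2*n-1) (2*v+1) := step2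
      _ = Nat.choose (2*n-2) (2*v) + Nat.choose (2*n-2) (2*v+1) := step3d
      _ = (2*U2 + a*a) + (2*U1 + 2*(a*b)) := by rw [← step3a, ← step3b]
  have hWU : W = U + a*b := by
    rw [step3c] at h1 ⊢
    generalize a*a = p at h1
    generalize a*b = q at h1 ⊢
    omega
  have h3 : n * W = n * U + n * (a*b) := by rw [hWU, Nat.mul_add]
  have h4 : 2 * S = n * (a*b) := by
    generalize n * W = x at step1 h3
    generalize n * U = y at step1 h3
    generalize n * (a*b) = z at h3
    omega
  rw [h4]
  ring

/-- For `w ≥ 2`, `h ≥ 1` and `s = w + h`: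
`2 · Σ_{i,j ≥ 0, i+j ≤ w-2} C(s-2, w+i+j)·C(s-2, w-2-i-j)
  = (s-3)·C(s-2, w-1)·C(s-4, w-2)` (all terms with `i + j > w - 2` vanish). -/
theorem Pstar_double_sum_identity (w h s : ℕ) (hw : 2 ≤ w) (hh : 1 ≤ h)
    (hs : s = w + h) :
    2 * (∑ i ∈ Finset.range (w - 1), ∑ j ∈ Finset.range (w - 1 - i),
          Nat.choose (s - 2) (w + i + j) * Nat.choose (s - 2) (w - 2 - i - j)) =
      (s - 3) * Nat.choose (s - 2) (w - 1) * Nat.choose (s - 4) (w - 2) := by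
  subst hs
  obtain ⟨v, rfl⟩ : ∃ v, w = v + 2 := ⟨w - 2, by omega⟩
  obtain ⟨g, rfl⟩ : ∃ g, h = g + 1 := ⟨h - 1, by omega⟩
  have e1 : v + 2 + (g+1) - 2 = v + g + 1 := by omega
  have e2 : v + 2 - 1 = v + 1 := by omega
  have e3 : v + 2 + (g+1) - 3 = v + g := by omega
  have e4 : v + 2 + (g+1) - 4 = v + g - 1 := by omega
  have e5 : v + 2 - 2 = v := by omega
  rw [e1, e2, e3, e4, e5]
  have collapse : (∑ i ∈ Finset.range (v + 1), ∑ j ∈ Finset.range (v + 1 - i),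
        Nat.choose (v+g+1) (v + 2 + i + j) * Nat.choose (v+g+1) (v - i - j))
      = ∑ k ∈ range (v+1), (k+1)
          * (Nat.choose (v+g+1) (v+2+k) * Nat.choose (v+g+1) (v-k)) := by
    have h1 : (∑ i ∈ Finset.range (v + 1), ∑ j ∈ Finset.range (v + 1 - i),
        Nat.choose (v+g+1) (v + 2 + i + j) * Nat.choose (v+g+1) (v - i - j))
        = ∑ i ∈ Finset.range (v+1), ∑ j ∈ Finset.range ((v+1) - i),
          (fun k => Nat.choose (v+g+1) (v+2+k) * Nat.choose (v+g+1) (v-k)) (i + j) := by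
      apply Finset.sum_congr rfl
      intro i hi
      apply Finset.sum_congr rfl
      intro j hj
      have ea : v + 2 + i + j = v+2+(i+j) := by omega
      have eb : v - i - j = v - (i+j) := by omega
      rw [ea, eb]
    rw [h1]
    exact tri_sum (fun k => Nat.choose (v+g+1) (v+2+k) * Nat.choose (v+g+1) (v-k)) (v+1)
  rw [collapse, core (v+g+1) v (by omega)]
  have er : v + g + 1 - 1 = v + g := by omega
  rw [er]
  -- (v+g+1) * (C(v+g, v+1) * C(v+g, v)) = (v+g) * C(v+g+1, v+1) * C(v+g-1, v)
  have h1 := mulrel (v+g+1) (v+1)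
  rw [er, show v+g+1-(v+1) = g from by omega] at h1
  have h2 := mulrel (v+g) v
  rw [show v+g-v = g from by omega] at h2
  zify at h1 h2 ⊢
  linear_combination (Nat.choose (v+g) v : ℤ) * h1
    - (Nat.choose (v+g+1) (v+1) : ℤ) * h2
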